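/- In the setting of the small-λ construction: for each fixed λ ∈ (0, λ̄], the function g(α) = ∫_Ω (α + u_{λ,α})^p is continuous and strictly increasing on (0,1], satisfies limsup_{α→0} g(α) ≤ ¼ and g(1) > 1 (for λ̄ small enough so that (2C₁λ̄)^p ≤ ¼), and hence there exists a unique α_λ ∈ (0,1] with g(α_λ) = 1; moreover this α_λ satisfies α_λ ≥ (3/4)^{1/p}/2 > 1/3. -/

import Mathlib

open MeasureTheory Real Bornology Set

noncomputable section

/-- Euclidean space ℝ^N. -/
abbrev EN (N : ℕ) := EuclideanSpace ℝ (Fin N)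

/-- The Laplacian, as the sum of second derivatives in the coordinate directions. -/
def lap {N : ℕ} (f : EN N → ℝ) (x : EN N) : ℝ :=
  ∑ i : Fin N, iteratedFDeriv ℝ 2 f x ![EuclideanSpace.single i 1, EuclideanSpace.single i 1]

/-- The average of `η` over `Ω` with respect to the weight `w`. -/
def wavg {N : ℕ} (Ω : Set (EN N)) (w η : EN N → ℝ) : ℝ :=
  (∫ x in Ω, w x * η x) / ∫ x in Ω, w x

/-- Dirichlet energy ∫_Ω |∇φ|². -/
def dirE {N : ℕ} (Ω : Set (EN N)) (φ : EN N → ℝ) : ℝ := ∫ x in Ω, ‖fderiv ℝ φ x‖ ^ 2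

/-- Admissible (nontrivial) test functions: a smooth proxy for H¹₀(Ω) ∖ {0}. -/
def testfun {N : ℕ} (Ω : Set (EN N)) (φ : EN N → ℝ) : Prop :=
  ContDiff ℝ 2 φ ∧ (∀ x ∉ Ω, φ x = 0) ∧ ∃ x ∈ Ω, φ x ≠ 0

/-- for fixed `λ ∈ (0,λ̄]`, the function `g(α) = ∫_Ω (α+u_{λ,α})^p` is
continuous and strictly increasing on `(0,1]`, `limsup_{α→0⁺} g ≤ ¼`, `g(1) > 1`, hence
there is a unique `α_λ ∈ (0,1]` with `g(α_λ) = 1`, and it satisfies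
`α_λ ≥ (3/4)^{1/p}/2 > 1/3`. -/
theorem stmt14 {N : ℕ} (Ω : Set (EN N)) (hΩo : IsOpen Ω) (hΩb : IsBounded Ω)
    (hvol : volume Ω = 1)
    (p C₁ lb : ℝ) (hp : 1 ≤ p) (hC₁ : 0 < C₁) (hlb : 0 < lb)
    (lam : ℝ) (hlam : lam ∈ Set.Ioc 0 lb)
    (u : ℝ → EN N → ℝ)
    (hsol : ∀ a ∈ Set.Ioc (0 : ℝ) 1,
      ContDiff ℝ 2 (u a) ∧
      (∀ x ∈ Ω, -lap (u a) x = lam * (a + u a x) ^ p) ∧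
      (∀ x ∈ frontier Ω, u a x = 0) ∧
      (∀ x, 0 ≤ u a x) ∧ (∀ x, |u a x| ≤ C₁ * lb))
    (hcont : ∀ x, ContinuousOn (fun a => u a x) (Set.Ioc 0 1))
    (hmono : ∀ a b : ℝ, 0 < a → a ≤ b → b ≤ 1 → ∀ x, u a x ≤ u b x)
    (hsmall : (2 * C₁ * lb) ^ p ≤ 1 / 4) :
    ContinuousOn (fun a => ∫ x in Ω, (a + u a x) ^ p) (Set.Ioc 0 1) ∧
    StrictMonoOn (fun a => ∫ x in Ω, (a + u a x) ^ p) (Set.Ioc 0 1) ∧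
    Filter.limsup (fun a => ∫ x in Ω, (a + u a x) ^ p) (nhdsWithin 0 (Set.Ioi 0)) ≤ 1 / 4 ∧
    1 < ∫ x in Ω, (1 + u 1 x) ^ p ∧
    (∃! a : ℝ, a ∈ Set.Ioc (0 : ℝ) 1 ∧ (∫ x in Ω, (a + u a x) ^ p) = 1) ∧
    (∀ a ∈ Set.Ioc (0 : ℝ) 1, (∫ x in Ω, (a + u a x) ^ p) = 1 →
      (3 / 4 : ℝ) ^ (1 / p) / 2 ≤ a ∧ 1 / 3 < a) := by
  obtain ⟨hlam0, _⟩ := hlam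
  have hp0 : (0:ℝ) < p := lt_of_lt_of_le one_pos hp
  have hM : 0 < C₁ * lb := mul_pos hC₁ hlb
  have hΩm : MeasurableSet Ω := hΩo.measurableSet
  haveI hfin : IsFiniteMeasure (volume.restrict Ω) :=
    ⟨by rw [Measure.restrict_apply_univ, hvol]; exact ENNReal.one_lt_top⟩
  set M := C₁ * lb with hMdef
  have hub : ∀ a ∈ Set.Ioc (0:ℝ) 1, ∀ x, u a x ≤ M := fun a ha x =>
    (abs_le.1 ((hsol a ha).2.2.2.2 x)).2
  have hnn : ∀ a ∈ Set.Ioc (0:ℝ) 1, ∀ x, 0 ≤ u a x := fun a ha => (hsol a ha).2.2.2.1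
  -- continuity in x
  have hcx : ∀ a ∈ Set.Ioc (0:ℝ) 1, Continuous (fun x => (a + u a x) ^ p) := fun a ha =>
    (continuous_const.add (hsol a ha).1.continuous).rpow_const fun x => Or.inr hp0.le
  have hbound : ∀ a ∈ Set.Ioc (0:ℝ) 1, ∀ x, ‖(a + u a x) ^ p‖ ≤ (1 + M) ^ p := by
    intro a ha x
    have h1 := hnn a ha x
    have h2 := hub a ha x
    rw [Real.norm_eq_abs, abs_of_nonneg (Real.rpow_nonneg (by linarith [ha.1]) p)]
    exact Real.rpow_le_rpow (by linarith [ha.1.le]) (by linarith [ha.2]) hp0.le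
  have hInt : ∀ a ∈ Set.Ioc (0:ℝ) 1, IntegrableOn (fun x => (a + u a x) ^ p) Ω volume := by
    intro a ha
    exact (integrable_const ((1 + M) ^ p)).mono'
      (hcx a ha).aestronglyMeasurable (Filter.Eventually.of_forall (hbound a ha))
  -- key pointwise bound
  have hkey : ∀ a ∈ Set.Ioc (0:ℝ) 1, ∀ x, (a + u a x) ^ p ≤ 2 ^ p * a ^ p + 1/4 := by
    intro a ha x
    have h0a : 0 < a := ha.1
    have h0u : 0 ≤ u a x := hnn a ha x
    have hux := hub a ha x
    have h1 : a + u a x ≤ 2 * max a M := by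
      rcases le_total a M with h | h
      · rw [max_eq_right h]; linarith
      · rw [max_eq_left h]; linarith
    have h2 : (a + u a x) ^ p ≤ (2 * max a M) ^ p :=
      Real.rpow_le_rpow (by linarith) h1 hp0.le
    have h3 : (2 * max a M : ℝ) ^ p = 2 ^ p * (max a M) ^ p :=
      Real.mul_rpow (by norm_num) (le_max_iff.2 (Or.inl h0a.le))
    have h4 : (max a M) ^ p ≤ a ^ p + M ^ p := by
      rcases max_cases a M with ⟨he, _⟩ | ⟨he, _⟩ <;> rw [he]
      · nlinarith [Real.rpow_nonneg hM.le p]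
      · nlinarith [Real.rpow_nonneg h0a.le p]
    have h5 : 2 ^ p * M ^ p ≤ 1/4 := by
      have he : (2:ℝ) ^ p * M ^ p = (2 * M) ^ p := (Real.mul_rpow (by norm_num) hM.le).symm
      have he2 : (2:ℝ) * M = 2 * C₁ * lb := by rw [hMdef, mul_assoc]
      rw [he, he2]; exact hsmall
    have h6 : (0:ℝ) ≤ 2 ^ p := Real.rpow_nonneg (by norm_num) p
    nlinarith [h2, h3, h4, h5, h6]
  have hg_le : ∀ a ∈ Set.Ioc (0:ℝ) 1,
      (∫ x in Ω, (a + u a x) ^ p) ≤ 2 ^ p * a ^ p + 1/4 := by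
    intro a ha
    have hmono' := integral_mono (hInt a ha) (integrable_const (2 ^ p * a ^ p + 1/4))
      (fun x => hkey a ha x)
    have hconst : (∫ _ in Ω, (2 ^ p * a ^ p + 1/4 : ℝ)) = 2 ^ p * a ^ p + 1/4 := by
      rw [setIntegral_const, measureReal_def, hvol]; simp
    linarith [hmono', hconst.le, hconst.ge]
  have hg_nn : ∀ a ∈ Set.Ioc (0:ℝ) 1, 0 ≤ ∫ x in Ω, (a + u a x) ^ p := fun a ha =>
    setIntegral_nonneg hΩm fun x _ => Real.rpow_nonneg (by linarith [hnn a ha x, ha.1.le]) p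
  -- continuity
  have hg_cont : ContinuousOn (fun a => ∫ x in Ω, (a + u a x) ^ p) (Set.Ioc 0 1) := by
    apply continuousOn_of_dominated (bound := fun _ => (1 + M) ^ p)
    · exact fun a ha => (hcx a ha).aestronglyMeasurable
    · exact fun a ha => Filter.Eventually.of_forall (hbound a ha)
    · exact integrable_const _
    · refine Filter.Eventually.of_forall fun x => ?_
      exact (continuous_id.continuousOn.add (hcont x)).rpow_const fun a _ => Or.inr hp0.le
  -- strict monotonicity
  have hg_mono : StrictMonoOn (fun a => ∫ x in Ω, (a + u a x) ^ p) (Set.Ioc 0 1) := by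
    intro a ha b hb hab
    have hdiff_pos : ∀ x, (a + u a x) ^ p < (b + u b x) ^ p := fun x =>
      Real.rpow_lt_rpow (by linarith [hnn a ha x, ha.1.le])
        (by linarith [hmono a b ha.1 hab.le hb.2 x]) hp0
    have hIi : IntegrableOn (fun x => (b + u b x) ^ p - (a + u a x) ^ p) Ω volume :=
      (hInt b hb).sub (hInt a ha)
    have hpos : 0 < ∫ x in Ω, ((b + u b x) ^ p - (a + u a x) ^ p) := by
      rw [setIntegral_pos_iff_support_of_nonneg_ae
        (Filter.Eventually.of_forall fun x => sub_nonneg.2 (hdiff_pos x).le) hIi]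
      have hsupp : Function.support (fun x => (b + u b x) ^ p - (a + u a x) ^ p) ∩ Ω = Ω := by
        apply Set.inter_eq_right.2
        intro x _
        exact sub_ne_zero.2 (hdiff_pos x).ne'
      rw [hsupp, hvol]; norm_num
    have hsub : (∫ x in Ω, ((b + u b x) ^ p - (a + u a x) ^ p)) =
        (∫ x in Ω, (b + u b x) ^ p) - ∫ x in Ω, (a + u a x) ^ p :=
      integral_sub (hInt b hb) (hInt a ha)
    show (∫ x in Ω, (a + u a x) ^ p) < ∫ x in Ω, (b + u b x) ^ p
    linarith
  have h1mem : (1:ℝ) ∈ Set.Ioc (0:ℝ) 1 := ⟨one_pos, le_refl 1⟩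
  -- g 1 > 1
  have hg1 : 1 < ∫ x in Ω, (1 + u 1 x) ^ p := by
    have hnn1 : ∀ x, 0 ≤ (1 + u 1 x) ^ p - 1 := by
      intro x
      have h1 := hnn 1 h1mem x
      have h := Real.rpow_le_rpow (by norm_num) (by linarith : (1:ℝ) ≤ 1 + u 1 x) hp0.le
      rw [Real.one_rpow] at h; linarith
    have hIh : IntegrableOn (fun x => (1 + u 1 x) ^ p - 1) Ω volume :=
      (hInt 1 h1mem).sub (integrable_const 1)
    have hpos : 0 < ∫ x in Ω, ((1 + u 1 x) ^ p - 1) := by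
      rw [setIntegral_pos_iff_support_of_nonneg_ae (Filter.Eventually.of_forall hnn1) hIh]
      by_contra hc
      have hz : volume (Function.support (fun x => (1 + u 1 x) ^ p - 1) ∩ Ω) = 0 :=
        le_antisymm (not_lt.1 hc) (zero_le)
      -- u 1 vanishes on Ω
      have hzero : ∀ x ∈ Ω, u 1 x = 0 := by
        by_contra hcc
        push_neg at hcc
        obtain ⟨y, hyΩ, hy0⟩ := hcc
        have hy : 0 < u 1 y := lt_of_le_of_ne (hnn 1 h1mem y) (Ne.symm hy0)
        have hUopen : IsOpen (Ω ∩ {x | 0 < u 1 x}) :=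
          hΩo.inter (isOpen_lt continuous_const (hsol 1 h1mem).1.continuous)
        have hUne : (Ω ∩ {x | 0 < u 1 x}).Nonempty := ⟨y, hyΩ, hy⟩
        have hUsub : Ω ∩ {x | 0 < u 1 x} ⊆
            Function.support (fun x => (1 + u 1 x) ^ p - 1) ∩ Ω := by
          rintro x ⟨hxΩ, hx⟩
          refine ⟨?_, hxΩ⟩
          have hlt : (1:ℝ) < (1 + u 1 x) ^ p := by
            have h := Real.rpow_lt_rpow (by norm_num) (by linarith [Set.mem_setOf_eq ▸ hx] :
              (1:ℝ) < 1 + u 1 x) hp0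
            rwa [Real.one_rpow] at h
          simp only [Function.mem_support]
          intro habs
          linarith [sub_eq_zero.1 habs]
        have hle := measure_mono (μ := volume) hUsub
        rw [hz] at hle
        exact absurd (le_antisymm hle (zero_le)) (hUopen.measure_pos volume hUne).ne'
      -- PDE contradiction
      obtain ⟨x0, hx0⟩ : Ω.Nonempty := by
        rcases Set.eq_empty_or_nonempty Ω with h | h
        · rw [h] at hvol; simp at hvol
        · exact h
      have hiter : iteratedFDeriv ℝ 2 (u 1) x0 = 0 := by
        have e1 : iteratedFDeriv ℝ 2 (u 1) x0 = iteratedFDerivWithin ℝ 2 (u 1) Ω x0 :=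
          (iteratedFDerivWithin_of_isOpen 2 hΩo hx0).symm
        have e2 : iteratedFDerivWithin ℝ 2 (u 1) Ω x0
            = iteratedFDerivWithin ℝ 2 (fun _ => (0:ℝ)) Ω x0 :=
          Set.EqOn.iteratedFDerivWithin (fun x hx => hzero x hx) 2 hx0
        have e3 : iteratedFDerivWithin ℝ 2 (fun _ : EN N => (0:ℝ)) Ω x0
            = iteratedFDeriv ℝ 2 (fun _ => (0:ℝ)) x0 :=
          iteratedFDerivWithin_of_isOpen 2 hΩo hx0
        rw [e1, e2, e3, iteratedFDeriv_zero_fun]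
        rfl
      have hpde := (hsol 1 h1mem).2.1 x0 hx0
      have hlap : lap (u 1) x0 = 0 := by
        simp [lap, hiter]
      rw [hlap, hzero x0 hx0] at hpde
      simp [Real.one_rpow] at hpde
      exact hlam0.ne' hpde.symm
    have hone : (∫ _ in Ω, (1:ℝ)) = 1 := by rw [setIntegral_const, measureReal_def, hvol]; simp
    have heq : (∫ x in Ω, ((1 + u 1 x) ^ p - 1)) = (∫ x in Ω, (1 + u 1 x) ^ p) - 1 := by
      rw [integral_sub (hInt 1 h1mem) (integrable_const 1), hone]
    linarith
  -- limsup
  have hlimsup : Filter.limsup (fun a => ∫ x in Ω, (a + u a x) ^ p)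
      (nhdsWithin 0 (Set.Ioi 0)) ≤ 1 / 4 := by
    have hev : ∀ᶠ a in nhdsWithin (0:ℝ) (Set.Ioi 0), a ∈ Set.Ioc (0:ℝ) 1 := by
      filter_upwards [Ioo_mem_nhdsGT one_pos] with a ha
      exact ⟨ha.1, ha.2.le⟩
    have h0 : Filter.Tendsto (fun a : ℝ => a ^ p) (nhdsWithin 0 (Set.Ioi 0)) (nhds 0) := by
      have hc : ContinuousAt (fun x : ℝ => x ^ p) 0 :=
        Real.continuousAt_rpow_const 0 p (Or.inr hp0.le)
      have htd : Filter.Tendsto (fun a : ℝ => a ^ p) (nhds 0) (nhds ((0:ℝ) ^ p)) := hc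
      rw [Real.zero_rpow hp0.ne'] at htd
      exact htd.mono_left nhdsWithin_le_nhds
    have htend : Filter.Tendsto (fun a : ℝ => 2 ^ p * a ^ p + 1/4)
        (nhdsWithin 0 (Set.Ioi 0)) (nhds (1/4)) := by
      simpa using (h0.const_mul ((2:ℝ) ^ p)).add (tendsto_const_nhds (x := (1/4:ℝ)))
    calc Filter.limsup (fun a => ∫ x in Ω, (a + u a x) ^ p) (nhdsWithin 0 (Set.Ioi 0))
        ≤ Filter.limsup (fun a : ℝ => 2 ^ p * a ^ p + 1/4) (nhdsWithin 0 (Set.Ioi 0)) :=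
          Filter.limsup_le_limsup (hev.mono fun a ha => hg_le a ha)
            (Filter.isCoboundedUnder_le_of_eventually_le _ (hev.mono fun a ha => hg_nn a ha))
            htend.isBoundedUnder_le
      _ = 1/4 := htend.limsup_eq
  -- existence & uniqueness
  have hq : (∫ x in Ω, ((1/4:ℝ) + u (1/4) x) ^ p) ≤ 3/4 := by
    have hmem : (1/4:ℝ) ∈ Set.Ioc (0:ℝ) 1 := by norm_num
    have h := hg_le (1/4) hmem
    have hhalf : (2:ℝ) ^ p * (1/4) ^ p ≤ 1/2 := by
      have he : (2:ℝ) ^ p * (1/4) ^ p = ((1/2:ℝ)) ^ p := by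
        rw [← Real.mul_rpow (by norm_num) (by norm_num)]; norm_num
      rw [he]
      calc ((1/2:ℝ)) ^ p ≤ (1/2:ℝ) ^ (1:ℝ) :=
            Real.rpow_le_rpow_of_exponent_ge (by norm_num) (by norm_num) hp
        _ = 1/2 := Real.rpow_one _
    linarith
  have hq4 : (1/4:ℝ) ∈ Set.Ioc (0:ℝ) 1 := by norm_num
  have hexist : ∃ c ∈ Set.Icc (1/4:ℝ) 1, (∫ x in Ω, (c + u c x) ^ p) = 1 := by
    have hsubset : Set.Icc (1/4:ℝ) 1 ⊆ Set.Ioc 0 1 := fun x hx => ⟨by linarith [hx.1], hx.2⟩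
    have hivt := intermediate_value_Icc (by norm_num : (1/4:ℝ) ≤ 1) (hg_cont.mono hsubset)
    have hmem1 : (1:ℝ) ∈ Set.Icc ((fun a => ∫ x in Ω, (a + u a x) ^ p) (1/4))
        ((fun a => ∫ x in Ω, (a + u a x) ^ p) 1) := by
      constructor
      · simpa using hq.trans (by norm_num)
      · simpa using hg1.le
    obtain ⟨c, hc, hgc⟩ := hivt hmem1
    exact ⟨c, hc, hgc⟩
  obtain ⟨c, hc, hgc⟩ := hexist
  have hcmem : c ∈ Set.Ioc (0:ℝ) 1 := ⟨by linarith [hc.1], hc.2⟩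
  refine ⟨hg_cont, hg_mono, hlimsup, hg1, ⟨c, ⟨hcmem, hgc⟩, ?_⟩, ?_⟩
  · rintro y ⟨hy, hgy⟩
    exact hg_mono.injOn hy hcmem (by rw [hgy, hgc])
  · intro a ha hga
    have h := hg_le a ha
    have h2p : (0:ℝ) < 2 ^ p := Real.rpow_pos_of_pos (by norm_num) p
    have h2 : (3/4:ℝ) / 2 ^ p ≤ a ^ p := by
      rw [div_le_iff₀ h2p, mul_comm]
      linarith
    have ha_ge : (3/4:ℝ) ^ (1/p) / 2 ≤ a := by
      have h0 : (0:ℝ) ≤ (3/4:ℝ) / 2 ^ p := by positivity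
      have hr := Real.rpow_le_rpow h0 h2 (by positivity : (0:ℝ) ≤ 1/p)
      rw [Real.div_rpow (by norm_num) (Real.rpow_nonneg (by norm_num) p)] at hr
      have e1 : ((2:ℝ) ^ p) ^ (1/p) = 2 := by
        rw [← Real.rpow_mul (by norm_num : (0:ℝ) ≤ 2), mul_one_div, div_self hp0.ne',
          Real.rpow_one]
      have e2 : (a ^ p) ^ (1/p) = a := by
        rw [one_div, Real.rpow_rpow_inv ha.1.le hp0.ne']
      rw [e1, e2] at hr
      exact hr
    refine ⟨ha_ge, ?_⟩
    have h34 : (3/4:ℝ) ^ (1:ℝ) ≤ (3/4:ℝ) ^ (1/p) :=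
      Real.rpow_le_rpow_of_exponent_ge (by norm_num) (by norm_num)
        (by rw [div_le_one hp0]; exact hp)
    rw [Real.rpow_one] at h34
    linarith
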